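/- arXiv:2211.12765 — 3 statements merged into one kernel-verified Lean document; each statement's English description precedes it below -/
import Mathlib

section
/- Theorem 5.2 (reconstructibility criterion): The SLS under logically generated switching is reconstructible if and only if there exist T ≥ 1 and a logical input sequence γ : Fin T → Fin M such that for every initial logical state α ∈ Fin N, letting σ be the switching-signal sequence generated from α by γ, one has LinearMap.range (Matrix.mulVecLin ((A (σ 0))ᵀ * (A (σ 1))ᵀ * ⋯ * (A (σ (T−1)))ᵀ)) ≤ ⨆_{t = 0}^{T−1} LinearMap.range (Matrix.mulVecLin ((A (σ 0))ᵀ * ⋯ * (A (σ (t−1)))ᵀ * (C (σ t))ᵀ)) (for t = 0 the latter product is just (C (σ 0))ᵀ). -/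
open Matrix

/-- Extension of a finite sequence `γ : Fin T → α` (with `T ≥ 1`) to `ℕ`,
agreeing with `γ` on `t < T`. -/
def extSeq {α : Type*} {T : ℕ} (hT : 0 < T) (γ : Fin T → α) : ℕ → α :=
  fun t => γ ⟨min t (T - 1), by omega⟩

/-- The logical state sequence generated from `θ₀` by the logical inputs `γ`:
`θ 0 = θ₀`, `θ (t+1) = L (γ t) (θ t)`. -/
def logicState {N M : ℕ} (L : Fin M → Fin N → Fin N) (θ₀ : Fin N)
    (γ : ℕ → Fin M) : ℕ → Fin N
  | 0 => θ₀
  | t + 1 => L (γ t) (logicState L θ₀ γ t)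

/-- The switching signal generated from `θ₀` by the logical inputs `γ`:
`σ t = R (γ t) (θ t)`. -/
def switchSig {q N M : ℕ} (L : Fin M → Fin N → Fin N) (R : Fin M → Fin N → Fin q)
    (θ₀ : Fin N) (γ : ℕ → Fin M) : ℕ → Fin q :=
  fun t => R (γ t) (logicState L θ₀ γ t)

/-- The state trajectory of the switched linear system:
`x 0 = x₀`, `x (t+1) = A (σ t) *ᵥ x t + B (σ t) *ᵥ u t`. -/
def traj {n m q : ℕ} (A : Fin q → Matrix (Fin n) (Fin n) ℝ)
    (B : Fin q → Matrix (Fin n) (Fin m) ℝ) (σ : ℕ → Fin q)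
    (u : ℕ → Fin m → ℝ) (x₀ : Fin n → ℝ) : ℕ → Fin n → ℝ
  | 0 => x₀
  | t + 1 => (A (σ t)).mulVec (traj A B σ u x₀ t) + (B (σ t)).mulVec (u t)

/-- `transMat A σ s t = A (σ (t-1)) * A (σ (t-2)) * ⋯ * A (σ s)` for `s ≤ t`
(and `1` when `t ≤ s`). -/
def transMat {n q : ℕ} (A : Fin q → Matrix (Fin n) (Fin n) ℝ) (σ : ℕ → Fin q)
    (s : ℕ) : ℕ → Matrix (Fin n) (Fin n) ℝ
  | 0 => 1
  | t + 1 => if s ≤ t then A (σ t) * transMat A σ s t else 1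

/-- Reachability of the SLS under logically generated switching. -/
def ReachableSLS {n m q N M : ℕ} (A : Fin q → Matrix (Fin n) (Fin n) ℝ)
    (B : Fin q → Matrix (Fin n) (Fin m) ℝ) (L : Fin M → Fin N → Fin N)
    (R : Fin M → Fin N → Fin q) : Prop :=
  ∀ (x : Fin n → ℝ) (θ₀ : Fin N), ∃ T : ℕ, ∃ hT : 1 ≤ T, ∃ γ : Fin T → Fin M,
    ∃ u : Fin T → (Fin m → ℝ),
      traj A B (switchSig L R θ₀ (extSeq hT γ)) (extSeq hT u) 0 T = x

/-- Controllability of the SLS under logically generated switching. -/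
def ControllableSLS {n m q N M : ℕ} (A : Fin q → Matrix (Fin n) (Fin n) ℝ)
    (B : Fin q → Matrix (Fin n) (Fin m) ℝ) (L : Fin M → Fin N → Fin N)
    (R : Fin M → Fin N → Fin q) : Prop :=
  ∀ x : Fin n → ℝ, ∃ T : ℕ, ∃ hT : 1 ≤ T, ∃ γ : Fin T → Fin M,
    ∀ θ₀ : Fin N, ∃ u : Fin T → (Fin m → ℝ),
      traj A B (switchSig L R θ₀ (extSeq hT γ)) (extSeq hT u) x T = 0

/-- Observability of the SLS under logically generated switching. -/
def ObservableSLS {n m p q N M : ℕ} (A : Fin q → Matrix (Fin n) (Fin n) ℝ)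
    (B : Fin q → Matrix (Fin n) (Fin m) ℝ) (C : Fin q → Matrix (Fin p) (Fin n) ℝ)
    (L : Fin M → Fin N → Fin N) (R : Fin M → Fin N → Fin q) : Prop :=
  ∃ T : ℕ, ∃ hT : 1 ≤ T, ∃ γ : Fin T → Fin M,
    ∀ (θ₀ : Fin N) (u : Fin T → (Fin m → ℝ)) (x₀ x₀' : Fin n → ℝ),
      (∀ t < T,
          (C (switchSig L R θ₀ (extSeq hT γ) t)).mulVec
            (traj A B (switchSig L R θ₀ (extSeq hT γ)) (extSeq hT u) x₀ t) =
          (C (switchSig L R θ₀ (extSeq hT γ) t)).mulVec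
            (traj A B (switchSig L R θ₀ (extSeq hT γ)) (extSeq hT u) x₀' t)) →
        x₀ = x₀'

/-- Reconstructibility of the SLS under logically generated switching. -/
def ReconstructibleSLS {n m p q N M : ℕ} (A : Fin q → Matrix (Fin n) (Fin n) ℝ)
    (B : Fin q → Matrix (Fin n) (Fin m) ℝ) (C : Fin q → Matrix (Fin p) (Fin n) ℝ)
    (L : Fin M → Fin N → Fin N) (R : Fin M → Fin N → Fin q) : Prop :=
  ∃ T : ℕ, ∃ hT : 1 ≤ T, ∃ γ : Fin T → Fin M,
    ∀ (θ₀ : Fin N) (u : Fin T → (Fin m → ℝ)) (x₀ x₀' : Fin n → ℝ),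
      (∀ t < T,
          (C (switchSig L R θ₀ (extSeq hT γ) t)).mulVec
            (traj A B (switchSig L R θ₀ (extSeq hT γ)) (extSeq hT u) x₀ t) =
          (C (switchSig L R θ₀ (extSeq hT γ) t)).mulVec
            (traj A B (switchSig L R θ₀ (extSeq hT γ)) (extSeq hT u) x₀' t)) →
        traj A B (switchSig L R θ₀ (extSeq hT γ)) (extSeq hT u) x₀ T =
          traj A B (switchSig L R θ₀ (extSeq hT γ)) (extSeq hT u) x₀' T



private lemma ker_eq_orth_range_adjoint
    {E F : Type*} [NormedAddCommGroup E] [InnerProductSpace ℝ E]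
    [NormedAddCommGroup F] [InnerProductSpace ℝ F]
    [FiniteDimensional ℝ E] [FiniteDimensional ℝ F] (f : E →ₗ[ℝ] F) :
    LinearMap.ker f = (LinearMap.range (LinearMap.adjoint f))ᗮ := by
  ext x
  simp only [LinearMap.mem_ker, Submodule.mem_orthogonal]
  constructor
  · rintro hx u ⟨y, rfl⟩
    rw [real_inner_comm, LinearMap.adjoint_inner_right, hx, inner_zero_left]
  · intro hx
    have h := hx (LinearMap.adjoint f (f x)) ⟨f x, rfl⟩
    rw [real_inner_comm, LinearMap.adjoint_inner_right] at h
    exact inner_self_eq_zero.mp h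

private lemma orth_le_orth_iff
    {E : Type*} [NormedAddCommGroup E] [InnerProductSpace ℝ E]
    [FiniteDimensional ℝ E] (K K' : Submodule ℝ E) :
    Kᗮ ≤ K'ᗮ ↔ K' ≤ K := by
  constructor
  · intro h
    have := Submodule.orthogonal_le h
    rwa [Submodule.orthogonal_orthogonal, Submodule.orthogonal_orthogonal] at this
  · exact Submodule.orthogonal_le

private lemma range_mulVecLin_eq_map {k n : ℕ} (M : Matrix (Fin k) (Fin n) ℝ) :
    LinearMap.range M.mulVecLin =
      Submodule.map (WithLp.linearEquiv 2 ℝ (Fin k → ℝ)).toLinearMap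
        (LinearMap.range (Matrix.toEuclideanLin M)) := by
  ext x
  simp only [LinearMap.mem_range, Submodule.mem_map, Matrix.mulVecLin_apply]
  constructor
  · rintro ⟨y, rfl⟩
    refine ⟨Matrix.toEuclideanLin M ((WithLp.equiv 2 (Fin n → ℝ)).symm y), ⟨_, rfl⟩, ?_⟩
    rw [(show ∀ v : Fin n → ℝ, Matrix.toEuclideanLin M ((WithLp.equiv 2 (Fin n → ℝ)).symm v) = (WithLp.equiv 2 (Fin k → ℝ)).symm (M *ᵥ v) from fun _ => rfl)]
    rfl
  · rintro ⟨z, ⟨y, rfl⟩, rfl⟩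
    refine ⟨(WithLp.equiv 2 (Fin n → ℝ)) y, ?_⟩
    have hy : y = (WithLp.equiv 2 (Fin n → ℝ)).symm ((WithLp.equiv 2 (Fin n → ℝ)) y) :=
      (Equiv.symm_apply_apply _ _).symm
    rw [hy, (show ∀ v : Fin n → ℝ, Matrix.toEuclideanLin M ((WithLp.equiv 2 (Fin n → ℝ)).symm v) = (WithLp.equiv 2 (Fin k → ℝ)).symm (M *ᵥ v) from fun _ => rfl)]
    rfl

private lemma mem_ker_toEuclideanLin_iff {k n : ℕ} (M : Matrix (Fin k) (Fin n) ℝ)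
    (d : Fin n → ℝ) :
    ((WithLp.equiv 2 (Fin n → ℝ)).symm d ∈ LinearMap.ker (Matrix.toEuclideanLin M)) ↔
      M *ᵥ d = 0 := by
  rw [LinearMap.mem_ker, (show ∀ v : Fin n → ℝ, Matrix.toEuclideanLin M ((WithLp.equiv 2 (Fin n → ℝ)).symm v) = (WithLp.equiv 2 (Fin k → ℝ)).symm (M *ᵥ v) from fun _ => rfl)]
  constructor
  · intro h
    have := congrArg (WithLp.equiv 2 (Fin k → ℝ)) h
    simpa using this
  · intro h
    rw [h]
    simp

private lemma core_criterion {n k p T : ℕ}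
    (G : Fin T → Matrix (Fin p) (Fin n) ℝ) (H : Matrix (Fin k) (Fin n) ℝ) :
    (LinearMap.range (Hᵀ.mulVecLin) ≤
        ⨆ t : Fin T, LinearMap.range ((G t)ᵀ.mulVecLin)) ↔
      ∀ d : Fin n → ℝ, (∀ t, (G t) *ᵥ d = 0) → H *ᵥ d = 0 := by
  have hadj : ∀ {k' : ℕ} (M : Matrix (Fin k') (Fin n) ℝ),
      Matrix.toEuclideanLin Mᵀ = LinearMap.adjoint (Matrix.toEuclideanLin M) := by
    intro k' M
    rw [← Matrix.conjTranspose_eq_transpose_of_trivial,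
      Matrix.toEuclideanLin_conjTranspose_eq_adjoint]
  rw [range_mulVecLin_eq_map]
  have hsup : (⨆ t : Fin T, LinearMap.range ((G t)ᵀ.mulVecLin)) =
      Submodule.map (WithLp.linearEquiv 2 ℝ (Fin n → ℝ)).toLinearMap
        (⨆ t : Fin T, LinearMap.range (Matrix.toEuclideanLin (G t)ᵀ)) := by
    rw [Submodule.map_iSup]
    exact iSup_congr fun t => range_mulVecLin_eq_map _
  rw [hsup, Submodule.map_le_map_iff_of_injective
    (f := (WithLp.linearEquiv 2 ℝ (Fin n → ℝ)).toLinearMap)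
    ((WithLp.linearEquiv 2 ℝ (Fin n → ℝ)).injective)]
  rw [hadj H]
  have h1 : (⨆ t : Fin T, LinearMap.range (Matrix.toEuclideanLin (G t)ᵀ)) =
      ⨆ t : Fin T, LinearMap.range (LinearMap.adjoint (Matrix.toEuclideanLin (G t))) :=
    iSup_congr fun t => by rw [hadj]
  rw [h1, ← orth_le_orth_iff, ← Submodule.iInf_orthogonal,
    ← ker_eq_orth_range_adjoint]
  have h2 : (⨅ t : Fin T, (LinearMap.range
      (LinearMap.adjoint (Matrix.toEuclideanLin (G t))))ᗮ) =
      ⨅ t : Fin T, LinearMap.ker (Matrix.toEuclideanLin (G t)) :=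
    iInf_congr fun t => (ker_eq_orth_range_adjoint _).symm
  rw [h2]
  constructor
  · intro h d hd
    exact (mem_ker_toEuclideanLin_iff H d).mp
      (h ((Submodule.mem_iInf _).mpr fun t => (mem_ker_toEuclideanLin_iff _ d).mpr (hd t)))
  · intro h x hx
    have hx' : ∀ t, (G t) *ᵥ ((WithLp.equiv 2 (Fin n → ℝ)) x) = 0 := by
      intro t
      refine (mem_ker_toEuclideanLin_iff (G t) _).mp ?_
      rw [Equiv.symm_apply_apply]
      exact (Submodule.mem_iInf _).mp hx t
    have := (mem_ker_toEuclideanLin_iff H _).mpr (h _ hx')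
    rwa [Equiv.symm_apply_apply] at this

private lemma traj_sub {n m q : ℕ} (A : Fin q → Matrix (Fin n) (Fin n) ℝ)
    (B : Fin q → Matrix (Fin n) (Fin m) ℝ) (σ : ℕ → Fin q) (u : ℕ → Fin m → ℝ)
    (x₀ x₀' : Fin n → ℝ) : ∀ t : ℕ,
    traj A B σ u x₀ t - traj A B σ u x₀' t = (transMat A σ 0 t) *ᵥ (x₀ - x₀')
  | 0 => by simp [traj, transMat, Matrix.one_mulVec]
  | t + 1 => by
    have ih := traj_sub A B σ u x₀ x₀' t
    simp only [traj, transMat, Nat.zero_le, if_true]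
    rw [add_sub_add_comm, sub_self, add_zero, ← Matrix.mulVec_sub, ih,
      Matrix.mulVec_mulVec]

/-- **Theorem 5.2 (reconstructibility criterion).** Note that
`(A (σ 0))ᵀ * ⋯ * (A (σ (t-1)))ᵀ = (A (σ (t-1)) * ⋯ * A (σ 0))ᵀ = (transMat A σ 0 t)ᵀ`. -/
theorem reconstructibility_criterion (n m p q N M : ℕ)
    (hn : 0 < n) (hm : 0 < m) (hp : 0 < p) (hq : 0 < q) (hN : 0 < N) (hM : 0 < M)
    (A : Fin q → Matrix (Fin n) (Fin n) ℝ) (B : Fin q → Matrix (Fin n) (Fin m) ℝ)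
    (C : Fin q → Matrix (Fin p) (Fin n) ℝ)
    (L : Fin M → Fin N → Fin N) (R : Fin M → Fin N → Fin q) :
    ReconstructibleSLS A B C L R ↔
      ∃ T : ℕ, ∃ hT : 1 ≤ T, ∃ γ : Fin T → Fin M, ∀ α : Fin N,
        LinearMap.range
            (Matrix.mulVecLin ((transMat A (switchSig L R α (extSeq hT γ)) 0 T)ᵀ)) ≤
          ⨆ t : Fin T, LinearMap.range
            (Matrix.mulVecLin
              ((transMat A (switchSig L R α (extSeq hT γ)) 0 (t : ℕ))ᵀ *
                (C (switchSig L R α (extSeq hT γ) (t : ℕ)))ᵀ)) := by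
  unfold ReconstructibleSLS
  refine exists_congr fun T => exists_congr fun hT => exists_congr fun γ =>
    forall_congr' fun α => ?_
  set σ := switchSig L R α (extSeq hT γ) with hσ
  set Φ := transMat A σ 0 with hΦ
  have hcore := core_criterion (fun t : Fin T => C (σ (t : ℕ)) * Φ (t : ℕ)) (Φ T)
  have hranges : (⨆ t : Fin T, LinearMap.range
        (Matrix.mulVecLin ((Φ (t : ℕ))ᵀ * (C (σ (t : ℕ)))ᵀ))) =
      ⨆ t : Fin T, LinearMap.range ((C (σ (t : ℕ)) * Φ (t : ℕ))ᵀ.mulVecLin) :=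
    iSup_congr fun t => by rw [Matrix.transpose_mul]
  constructor
  · -- recon body → range criterion
    intro h
    rw [hranges, hcore]
    intro d hd
    have h0 := h (fun _ => 0) d 0
    have htraj : ∀ t : ℕ,
        traj A B σ (extSeq hT (fun _ => 0)) d t -
          traj A B σ (extSeq hT (fun _ => 0)) 0 t = Φ t *ᵥ d := by
      intro t
      rw [traj_sub, sub_zero]
    have hout : ∀ t < T,
        (C (σ t)).mulVec (traj A B σ (extSeq hT (fun _ => 0)) d t) =
          (C (σ t)).mulVec (traj A B σ (extSeq hT (fun _ => 0)) 0 t) := by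
      intro t ht
      rw [← sub_eq_zero, ← Matrix.mulVec_sub, htraj t, Matrix.mulVec_mulVec]
      exact hd ⟨t, ht⟩
    have hfin := h0 hout
    have := htraj T
    rw [hfin, sub_self] at this
    exact this.symm
  · -- range criterion → recon body
    intro h u x₀ x₀' hout
    rw [hranges, hcore] at h
    have hd : ∀ t : Fin T, (C (σ (t : ℕ)) * Φ (t : ℕ)) *ᵥ (x₀ - x₀') = 0 := by
      intro t
      rw [← Matrix.mulVec_mulVec, ← traj_sub A B σ (extSeq hT u) x₀ x₀' (t : ℕ),
        Matrix.mulVec_sub, sub_eq_zero]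
      exact hout (t : ℕ) t.2
    have := h (x₀ - x₀') hd
    rw [← traj_sub A B σ (extSeq hT u) x₀ x₀' T] at this
    exact sub_eq_zero.mp this
end

section
/- Remark 4.2(2): If the matrix A i is invertible for every i ∈ Fin q (i.e., the switched linear system is reversible), then the SLS under logically generated switching is reachable if and only if it is controllable. -/
section helpers
variable {n m q N M : ℕ}
variable (A : Fin q → Matrix (Fin n) (Fin n) ℝ) (B : Fin q → Matrix (Fin n) (Fin m) ℝ)
variable (L : Fin M → Fin N → Fin N) (R : Fin M → Fin N → Fin q)

lemma traj_congr {σ σ' : ℕ → Fin q} {u u' : ℕ → Fin m → ℝ} (x : Fin n → ℝ) (t : ℕ)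
    (hσ : ∀ s < t, σ s = σ' s) (hu : ∀ s < t, u s = u' s) :
    traj A B σ u x t = traj A B σ' u' x t := by
  induction t with
  | zero => rfl
  | succ t ih =>
    simp only [traj]
    rw [ih (fun s hs => hσ s (by omega)) (fun s hs => hu s (by omega)),
        hσ t (by omega), hu t (by omega)]

lemma logicState_congr (θ : Fin N) {γ γ' : ℕ → Fin M} (t : ℕ)
    (h : ∀ s < t, γ s = γ' s) : logicState L θ γ t = logicState L θ γ' t := by
  induction t with
  | zero => rfl
  | succ t ih =>
    simp only [logicState]
    rw [ih (fun s hs => h s (by omega)), h t (by omega)]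

lemma switchSig_congr (θ : Fin N) {γ γ' : ℕ → Fin M} (t : ℕ)
    (h : ∀ s < t, γ s = γ' s) : ∀ s < t, switchSig L R θ γ s = switchSig L R θ γ' s := by
  intro s hs
  unfold switchSig
  rw [logicState_congr L θ s (fun r hr => h r (by omega)), h s hs]

lemma traj_add (σ : ℕ → Fin q) (u u' : ℕ → Fin m → ℝ) (x x' : Fin n → ℝ) (t : ℕ) :
    traj A B σ (u + u') (x + x') t = traj A B σ u x t + traj A B σ u' x' t := by
  induction t with
  | zero => rfl
  | succ t ih =>
      simp only [traj, ih, Pi.add_apply, Matrix.mulVec_add]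
      abel

lemma traj_smul (σ : ℕ → Fin q) (u : ℕ → Fin m → ℝ) (x : Fin n → ℝ) (c : ℝ) (t : ℕ) :
    traj A B σ (c • u) (c • x) t = c • traj A B σ u x t := by
  induction t with
  | zero => rfl
  | succ t ih =>
      simp only [traj, ih, Pi.smul_apply, Matrix.mulVec_smul, smul_add]

lemma traj_zero (σ : ℕ → Fin q) (t : ℕ) :
    traj A B σ 0 0 t = 0 := by
  induction t with
  | zero => rfl
  | succ t ih => simp [traj, ih]

lemma traj_shift (σ : ℕ → Fin q) (u : ℕ → Fin m → ℝ) (x : Fin n → ℝ) (T s : ℕ) :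
    traj A B σ u x (T + s) =
      traj A B (fun t => σ (T + t)) (fun t => u (T + t)) (traj A B σ u x T) s := by
  induction s with
  | zero => rfl
  | succ s ih =>
      show traj A B σ u x ((T + s) + 1) = _
      simp only [traj, ih]

lemma logicState_shift (θ : Fin N) (γ : ℕ → Fin M) (T s : ℕ) :
    logicState L θ γ (T + s) =
      logicState L (logicState L θ γ T) (fun t => γ (T + t)) s := by
  induction s with
  | zero => rfl
  | succ s ih =>
      show logicState L θ γ ((T + s) + 1) = _
      simp only [logicState, ih]

lemma switchSig_shift (θ : Fin N) (γ : ℕ → Fin M) (T s : ℕ) :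
    switchSig L R θ γ (T + s) =
      switchSig L R (logicState L θ γ T) (fun t => γ (T + t)) s := by
  unfold switchSig
  rw [logicState_shift]

lemma extSeq_eq {α : Type*} {T : ℕ} (hT : 0 < T) (γ : Fin T → α) (t : ℕ) (h : t < T) :
    extSeq hT γ t = γ ⟨t, h⟩ := by
  unfold extSeq
  congr 1
  apply Fin.ext
  simp only []
  omega

open MeasureTheory in
lemma exists_submodule_eq_top {ι : Type} [Countable ι] (S : ι → Submodule ℝ (Fin n → ℝ))
    (h : ∀ x, ∃ i, x ∈ S i) : ∃ i, S i = ⊤ := by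
  by_contra hc
  push_neg at hc
  have h0 : ∀ i, volume ((S i : Set (Fin n → ℝ))) = 0 :=
    fun i => Measure.addHaar_submodule _ _ (hc i)
  have h1 : (Set.univ : Set (Fin n → ℝ)) ⊆ ⋃ i, (S i : Set (Fin n → ℝ)) :=
    fun x _ => Set.mem_iUnion.2 (h x)
  have h2 := (measure_mono (μ := volume) h1).trans_eq (measure_iUnion_null h0)
  exact (isOpen_univ.measure_ne_zero volume Set.univ_nonempty) (le_antisymm h2 bot_le)

/-- The set of states reachable from `0` at time `T` along `σ`. -/
def reachSub (σ : ℕ → Fin q) (T : ℕ) : Submodule ℝ (Fin n → ℝ) where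
  carrier := {x | ∃ u : ℕ → Fin m → ℝ, traj A B σ u 0 T = x}
  zero_mem' := ⟨0, traj_zero A B σ T⟩
  add_mem' := by
    rintro a b ⟨u, hu⟩ ⟨u', hu'⟩
    refine ⟨u + u', ?_⟩
    have h := traj_add A B σ u u' 0 0 T
    rw [add_zero] at h
    rw [h, hu, hu']
  smul_mem' := by
    rintro c a ⟨u, hu⟩
    refine ⟨c • u, ?_⟩
    have h := traj_smul A B σ u 0 c T
    rw [smul_zero] at h
    rw [h, hu]

lemma mem_reachSub {σ : ℕ → Fin q} {T : ℕ} {x : Fin n → ℝ} :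
    x ∈ reachSub A B σ T ↔ ∃ u : ℕ → Fin m → ℝ, traj A B σ u 0 T = x := Iff.rfl

/-- The set of states controllable to `0` at time `T` along `σ`. -/
def ctrlSub (σ : ℕ → Fin q) (T : ℕ) : Submodule ℝ (Fin n → ℝ) where
  carrier := {x | ∃ u : ℕ → Fin m → ℝ, traj A B σ u x T = 0}
  zero_mem' := ⟨0, traj_zero A B σ T⟩
  add_mem' := by
    rintro a b ⟨u, hu⟩ ⟨u', hu'⟩
    refine ⟨u + u', ?_⟩
    rw [traj_add A B σ u u' a b T, hu, hu', add_zero]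
  smul_mem' := by
    rintro c a ⟨u, hu⟩
    refine ⟨c • u, ?_⟩
    rw [traj_smul A B σ u a c T, hu, smul_zero]

lemma mem_ctrlSub {σ : ℕ → Fin q} {T : ℕ} {x : Fin n → ℝ} :
    x ∈ ctrlSub A B σ T ↔ ∃ u : ℕ → Fin m → ℝ, traj A B σ u x T = 0 := Iff.rfl

/-- From reachability, full reachable subspace for a single initial logical state. -/
lemma fullReach (hre : ReachableSLS A B L R) (η : Fin N) :
    ∃ T γℕ, 1 ≤ T ∧ ∀ w : Fin n → ℝ, ∃ u : ℕ → Fin m → ℝ,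
      traj A B (switchSig L R η γℕ) u 0 T = w := by
  have hcov : ∀ x : Fin n → ℝ, ∃ i : (T : ℕ) × (Fin (T + 1) → Fin M),
      x ∈ reachSub A B (switchSig L R η (extSeq (Nat.succ_pos i.1) i.2)) (i.1 + 1) := by
    intro x
    obtain ⟨T, hT, γ, u, hu⟩ := hre x η
    refine ⟨⟨T - 1, fun j => γ ⟨j.1, lt_of_lt_of_le j.2 (by omega)⟩⟩, ?_⟩
    have hγe : extSeq (Nat.succ_pos (T - 1))
        (fun j : Fin (T - 1 + 1) => γ ⟨j.1, lt_of_lt_of_le j.2 (by omega)⟩) =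
        extSeq hT γ := by
      funext s; rfl
    rw [mem_reachSub, hγe]
    have hTT : T - 1 + 1 = T := by omega
    rw [hTT]
    exact ⟨extSeq hT u, hu⟩
  obtain ⟨i, hi⟩ := exists_submodule_eq_top _ hcov
  refine ⟨i.1 + 1, extSeq (Nat.succ_pos i.1) i.2, Nat.succ_le_succ (Nat.zero_le _), fun w => ?_⟩
  have : w ∈ reachSub A B (switchSig L R η (extSeq (Nat.succ_pos i.1) i.2)) (i.1 + 1) := by
    rw [hi]; trivial
  exact this

lemma traj_free_surj (hA : ∀ i, IsUnit (A i)) (σ : ℕ → Fin q) (T : ℕ) :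
    ∀ w : Fin n → ℝ, ∃ x, traj A B σ 0 x T = w := by
  induction T with
  | zero => exact fun w => ⟨w, rfl⟩
  | succ T ih =>
    intro w
    obtain ⟨x, hx⟩ := ih ((A (σ T))⁻¹.mulVec w)
    refine ⟨x, ?_⟩
    have h1 : A (σ T) * (A (σ T))⁻¹ = 1 :=
      Matrix.mul_nonsing_inv _ ((Matrix.isUnit_iff_isUnit_det _).mp (hA _))
    show (A (σ T)).mulVec (traj A B σ 0 x T) + (B (σ T)).mulVec ((0 : ℕ → Fin m → ℝ) T) = w
    rw [hx, Matrix.mulVec_mulVec, h1, Matrix.one_mulVec]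
    simp

lemma ctrlList (hM : 0 < M) (hre : ReachableSLS A B L R) (x : Fin n → ℝ) (l : List (Fin N)) :
    ∃ T, 1 ≤ T ∧ ∃ γ : ℕ → Fin M, ∀ θ₀ ∈ l, ∃ u : ℕ → Fin m → ℝ,
      traj A B (switchSig L R θ₀ γ) u x T = 0 := by
  induction l with
  | nil => exact ⟨1, le_refl 1, fun _ => ⟨0, hM⟩, fun θ₀ h => absurd h List.not_mem_nil⟩
  | cons θ l ih =>
    obtain ⟨T₁, hT₁, γ₁, h₁⟩ := ih
    set η := logicState L θ γ₁ T₁ with hη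
    set v := traj A B (switchSig L R θ γ₁) 0 x T₁ with hv
    obtain ⟨T₂, γ₂, hT₂, hfull⟩ := fullReach A B L R hre η
    obtain ⟨u₂, hu₂⟩ := hfull (-(traj A B (switchSig L R η γ₂) 0 v T₂))
    set γ : ℕ → Fin M := fun t => if t < T₁ then γ₁ t else γ₂ (t - T₁) with hγ
    have hγlow : ∀ s < T₁, γ s = γ₁ s := fun s hs => by simp [hγ, hs]
    have hγhigh : ∀ t, γ (T₁ + t) = γ₂ t := fun t => by simp [hγ]
    refine ⟨T₁ + T₂, by omega, γ, ?_⟩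
    intro θ₀ hθ₀
    rcases List.mem_cons.mp hθ₀ with h | h
    · subst h
      set u : ℕ → Fin m → ℝ := fun t => if t < T₁ then 0 else u₂ (t - T₁) with hu
      refine ⟨u, ?_⟩
      rw [traj_shift]
      have hv' : traj A B (switchSig L R θ₀ γ) u x T₁ = v := by
        rw [hv]
        exact traj_congr A B x T₁ (switchSig_congr L R θ₀ T₁ hγlow)
          (fun s hs => by simp [hu, hs])
      rw [hv']
      have hσ : (fun t => switchSig L R θ₀ γ (T₁ + t)) = switchSig L R η γ₂ := by
        funext t
        rw [switchSig_shift]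
        rw [show logicState L θ₀ γ T₁ = η from (logicState_congr L θ₀ T₁ hγlow).trans hη.symm]
        rw [show (fun s => γ (T₁ + s)) = γ₂ from funext hγhigh]
      have husft : (fun t => u (T₁ + t)) = u₂ := by
        funext t; simp [hu]
      rw [hσ, husft]
      have key : traj A B (switchSig L R η γ₂) u₂ v T₂ =
          traj A B (switchSig L R η γ₂) u₂ 0 T₂ + traj A B (switchSig L R η γ₂) 0 v T₂ := by
        have h := traj_add A B (switchSig L R η γ₂) u₂ 0 0 v T₂
        rwa [add_zero, zero_add] at h
      rw [key, hu₂]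
      simp
    · obtain ⟨u₁, hu₁⟩ := h₁ θ₀ h
      set u : ℕ → Fin m → ℝ := fun t => if t < T₁ then u₁ t else 0 with hu
      refine ⟨u, ?_⟩
      rw [traj_shift]
      have hv0 : traj A B (switchSig L R θ₀ γ) u x T₁ = 0 := by
        rw [← hu₁]
        exact traj_congr A B x T₁ (switchSig_congr L R θ₀ T₁ hγlow)
          (fun s hs => by simp [hu, hs])
      rw [hv0]
      have hu0 : (fun t => u (T₁ + t)) = (0 : ℕ → Fin m → ℝ) := by
        funext t; simp [hu]
      rw [hu0, traj_zero]

end helpers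
/-- **Remark 4.2(2).** If every `A i` is invertible (the system is reversible),
then reachability and controllability of the SLS under logically generated
switching are equivalent. -/
theorem reachable_iff_controllable_of_invertible (n m p q N M : ℕ)
    (hn : 0 < n) (hm : 0 < m) (hp : 0 < p) (hq : 0 < q) (hN : 0 < N) (hM : 0 < M)
    (A : Fin q → Matrix (Fin n) (Fin n) ℝ) (B : Fin q → Matrix (Fin n) (Fin m) ℝ)
    (C : Fin q → Matrix (Fin p) (Fin n) ℝ)
    (L : Fin M → Fin N → Fin N) (R : Fin M → Fin N → Fin q)
    (hA : ∀ i : Fin q, IsUnit (A i)) :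
    ReachableSLS A B L R ↔ ControllableSLS A B L R := by
  constructor
  · -- Reachable → Controllable
    intro hre x
    obtain ⟨T, hT1, γℕ, h⟩ := ctrlList A B L R hM hre x (List.finRange N)
    refine ⟨T, hT1, fun t => γℕ t.1, fun θ₀ => ?_⟩
    obtain ⟨uℕ, huℕ⟩ := h θ₀ (List.mem_finRange θ₀)
    refine ⟨fun t => uℕ t.1, ?_⟩
    have hγ : ∀ s < T, extSeq hT1 (fun t : Fin T => γℕ t.1) s = γℕ s := fun s hs => by
      rw [extSeq_eq hT1 _ s hs]
    have hu : ∀ s < T, extSeq hT1 (fun t : Fin T => uℕ t.1) s = uℕ s := fun s hs => by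
      rw [extSeq_eq hT1 _ s hs]
    exact (traj_congr A B x T (switchSig_congr L R θ₀ T hγ) hu).trans huℕ
  · -- Controllable → Reachable
    intro hctl x θ₀
    have hcov : ∀ y : Fin n → ℝ, ∃ i : (T : ℕ) × (Fin (T + 1) → Fin M),
        y ∈ ctrlSub A B (switchSig L R θ₀ (extSeq (Nat.succ_pos i.1) i.2)) (i.1 + 1) := by
      intro y
      obtain ⟨T, hT, γ, h⟩ := hctl y
      obtain ⟨u, hu⟩ := h θ₀
      refine ⟨⟨T - 1, fun j => γ ⟨j.1, lt_of_lt_of_le j.2 (by omega)⟩⟩, ?_⟩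
      have hγe : extSeq (Nat.succ_pos (T - 1))
          (fun j : Fin (T - 1 + 1) => γ ⟨j.1, lt_of_lt_of_le j.2 (by omega)⟩) =
          extSeq hT γ := by
        funext s; rfl
      rw [mem_ctrlSub, hγe]
      have hTT : T - 1 + 1 = T := by omega
      rw [hTT]
      exact ⟨extSeq hT u, hu⟩
    obtain ⟨i, hi⟩ := exists_submodule_eq_top _ hcov
    set σ := switchSig L R θ₀ (extSeq (Nat.succ_pos i.1) i.2) with hσdef
    obtain ⟨z, hz⟩ := traj_free_surj A B hA σ (i.1 + 1) (-x)
    have hzmem : z ∈ ctrlSub A B σ (i.1 + 1) := by rw [hi]; trivial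
    obtain ⟨u, hu⟩ := hzmem
    have hx : traj A B σ u 0 (i.1 + 1) = x := by
      have h := traj_add A B σ u 0 z (-z) (i.1 + 1)
      rw [add_zero, add_neg_cancel] at h
      have hneg : traj A B σ 0 (-z) (i.1 + 1) = - traj A B σ 0 z (i.1 + 1) := by
        have hs := traj_smul A B σ 0 z (-1) (i.1 + 1)
        rw [smul_zero] at hs
        simpa using hs
      rw [h, hu, hneg, hz, zero_add, neg_neg]
    have hT1 : 1 ≤ i.1 + 1 := Nat.succ_le_succ (Nat.zero_le _)
    refine ⟨i.1 + 1, hT1, i.2, fun t => u t.1, ?_⟩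
    have hγ : ∀ s < i.1 + 1, extSeq hT1 i.2 s = extSeq (Nat.succ_pos i.1) i.2 s :=
      fun s hs => rfl
    have hu' : ∀ s < i.1 + 1, extSeq hT1 (fun t : Fin (i.1 + 1) => u t.1) s = u s := fun s hs => by
      rw [extSeq_eq hT1 _ s hs]
    exact (traj_congr A B 0 (i.1 + 1) (switchSig_congr L R θ₀ (i.1 + 1) hγ) hu').trans hx
end

section
/- Proposition 2.2.1(2)-(4): (a) Every entry of column j of C_ℓ is positive if and only if for every i ∈ Fin b there exists an ℓ-step input-state trajectory starting in Ω⁰ j and ending in Ωᵈ i (the network is ℓ-step input-state set reachable at Ω⁰ j). (b) Every entry of row i of C_ℓ is positive if and only if for every j ∈ Fin a there exists an ℓ-step input-state trajectory starting in Ω⁰ j and ending in Ωᵈ i (Ωᵈ i is globally ℓ-step input-state set reachable). (c) Every entry of C_ℓ is positive if and only if for every j ∈ Fin a and i ∈ Fin b there exists an ℓ-step input-state trajectory starting in Ω⁰ j and ending in Ωᵈ i. -/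
attribute [local instance] Classical.propDecidable

/-- The input-state matrix `𝐋` of the logical control network `L`:
`𝐋 (γ', θ') (γ, θ) = 1` if `θ' = L γ θ` and `0` otherwise. -/
def inputStateMat {M N : ℕ} (L : Fin M → Fin N → Fin N) :
    Matrix (Fin M × Fin N) (Fin M × Fin N) ℕ :=
  fun p' p => if p'.2 = L p.1 p.2 then 1 else 0

/-- The index matrix of a finite family of input-state subsets. -/
noncomputable def idxMat {M N s : ℕ} (Ω : Fin s → Set (Fin M × Fin N)) :
    Matrix (Fin M × Fin N) (Fin s) ℕ :=
  fun v j => if v ∈ Ω j then 1 else 0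

/-- The `ℓ`-step input-state set reachability matrix
`C_ℓ = (P_{Ωᵈ})ᵀ * 𝐋^ℓ * P_{Ω⁰}`. -/
noncomputable def reachMat {M N a b : ℕ} (L : Fin M → Fin N → Fin N) (ℓ : ℕ)
    (Ω0 : Fin a → Set (Fin M × Fin N)) (Ωd : Fin b → Set (Fin M × Fin N)) :
    Matrix (Fin b) (Fin a) ℕ :=
  (idxMat Ωd).transpose * (inputStateMat L) ^ ℓ * idxMat Ω0

/-- `w : Fin (ℓ+1) → Fin M × Fin N` is an `ℓ`-step input-state trajectory of the
logical control network `L`: `θ (t+1) = L (γ t) (θ t)` for all `t < ℓ`. -/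
def IsISTraj {M N : ℕ} (L : Fin M → Fin N → Fin N) (ℓ : ℕ)
    (w : Fin (ℓ + 1) → Fin M × Fin N) : Prop :=
  ∀ t : Fin ℓ, (w t.succ).2 = L (w t.castSucc).1 (w t.castSucc).2

lemma pow_entry_pos_iff {M N : ℕ} (L : Fin M → Fin N → Fin N) :
    ∀ (ℓ : ℕ) (p' p : Fin M × Fin N),
      0 < ((inputStateMat L) ^ ℓ) p' p ↔
        ∃ w : Fin (ℓ + 1) → Fin M × Fin N,
          IsISTraj L ℓ w ∧ w 0 = p ∧ w (Fin.last ℓ) = p' := by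
  intro ℓ
  induction ℓ with
  | zero =>
    intro p' p
    simp only [pow_zero, Matrix.one_apply]
    constructor
    · intro h
      have : p' = p := by by_contra hne; simp [hne] at h
      exact ⟨fun _ => p, fun t => t.elim0, rfl, this.symm⟩
    · rintro ⟨w, _, h0, hl⟩
      have : p' = p := by rw [← h0, ← hl]; rfl
      simp [this]
  | succ n ih =>
    intro p' p
    rw [pow_succ, Matrix.mul_apply, pos_iff_ne_zero, Ne, Finset.sum_eq_zero_iff]
    push_neg
    constructor
    · rintro ⟨q, -, hq⟩
      rw [Nat.mul_ne_zero_iff] at hq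
      obtain ⟨h1, h2⟩ := hq
      have hq2 : q.2 = L p.1 p.2 := by
        by_contra hne; simp [inputStateMat, hne] at h2
      obtain ⟨w, hw, h0, hl⟩ := (ih p' q).mp (Nat.pos_of_ne_zero h1)
      refine ⟨Fin.cases (motive := fun _ => Fin M × Fin N) p w, ?_, ?_, ?_⟩
      · intro t
        refine Fin.cases (motive := fun t : Fin (n+1) =>
          ((Fin.cases (motive := fun _ => Fin M × Fin N) p w) t.succ).2 =
            L ((Fin.cases (motive := fun _ => Fin M × Fin N) p w) t.castSucc).1
              ((Fin.cases (motive := fun _ => Fin M × Fin N) p w) t.castSucc).2) ?_ ?_ t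
        · show (Fin.cases (motive := fun _ => Fin M × Fin N) p w (Fin.succ 0)).2 = _
          simp only [Fin.castSucc_zero, Fin.cases_succ, Fin.cases_zero, h0]
          exact hq2
        · intro s
          rw [show (s.succ : Fin (n+1)).castSucc = (s.castSucc).succ from
            (Fin.succ_castSucc s).symm]
          simp only [Fin.cases_succ]
          exact hw s
      · rfl
      · rw [show (Fin.last (n+1)) = (Fin.last n).succ from rfl]
        simp only [Fin.cases_succ]
        exact hl
    · rintro ⟨w, hw, h0, hl⟩
      refine ⟨w 1, Finset.mem_univ _, ?_⟩
      rw [Nat.mul_ne_zero_iff]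
      constructor
      · have : 0 < ((inputStateMat L) ^ n) p' (w 1) := by
          refine (ih p' (w 1)).mpr ⟨fun t => w t.succ, fun t => ?_, rfl, ?_⟩
          · show (w t.succ.succ).2 = L (w t.castSucc.succ).1 (w t.castSucc.succ).2
            have h := hw t.succ
            rw [← Fin.succ_castSucc] at h
            exact h
          · show w (Fin.last n).succ = p'
            rw [Fin.succ_last]; exact hl
        omega
      · have h1 : (w 1).2 = L p.1 p.2 := by
          have := hw 0
          rw [Fin.succ_zero_eq_one, Fin.castSucc_zero, h0] at this
          exact this
        simp [inputStateMat, h1]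

lemma reachMat_pos_iff {M N a b : ℕ} (L : Fin M → Fin N → Fin N) (ℓ : ℕ)
    (Ω0 : Fin a → Set (Fin M × Fin N)) (Ωd : Fin b → Set (Fin M × Fin N))
    (i : Fin b) (j : Fin a) :
    0 < reachMat L ℓ Ω0 Ωd i j ↔
      ∃ w : Fin (ℓ + 1) → Fin M × Fin N,
        IsISTraj L ℓ w ∧ w 0 ∈ Ω0 j ∧ w (Fin.last ℓ) ∈ Ωd i := by
  unfold reachMat
  rw [Matrix.mul_apply]
  constructor
  · intro h
    rw [pos_iff_ne_zero, Ne, Finset.sum_eq_zero_iff] at h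
    push_neg at h
    obtain ⟨p, -, hp⟩ := h
    rw [Nat.mul_ne_zero_iff] at hp
    obtain ⟨h1, h2⟩ := hp
    rw [Matrix.mul_apply, Ne, Finset.sum_eq_zero_iff] at h1
    push_neg at h1
    obtain ⟨p', -, hp'⟩ := h1
    rw [Nat.mul_ne_zero_iff] at hp'
    obtain ⟨hd, hpow⟩ := hp'
    have hΩd : p' ∈ Ωd i := by
      by_contra hc; simp [idxMat, Matrix.transpose_apply, hc] at hd
    have hΩ0 : p ∈ Ω0 j := by
      by_contra hc; simp [idxMat, hc] at h2
    obtain ⟨w, hw, h0, hl⟩ := (pow_entry_pos_iff L ℓ p' p).mp (Nat.pos_of_ne_zero hpow)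
    exact ⟨w, hw, h0 ▸ hΩ0, hl ▸ hΩd⟩
  · rintro ⟨w, hw, h0, hl⟩
    refine Finset.sum_pos' (fun _ _ => Nat.zero_le _) ⟨w 0, Finset.mem_univ _, ?_⟩
    have hC : idxMat Ω0 (w 0) j = 1 := by simp [idxMat, h0]
    have hAB : 0 < ((idxMat Ωd).transpose * (inputStateMat L) ^ ℓ) i (w 0) := by
      rw [Matrix.mul_apply]
      refine Finset.sum_pos' (fun _ _ => Nat.zero_le _)
        ⟨w (Fin.last ℓ), Finset.mem_univ _, ?_⟩
      have hA : (idxMat Ωd).transpose i (w (Fin.last ℓ)) = 1 := by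
        simp [idxMat, Matrix.transpose_apply, hl]
      have hB : 0 < ((inputStateMat L) ^ ℓ) (w (Fin.last ℓ)) (w 0) :=
        (pow_entry_pos_iff L ℓ _ _).mpr ⟨w, hw, rfl, rfl⟩
      rw [hA, one_mul]; exact hB
    rw [hC, mul_one]; exact hAB


/-- **Proposition 2.2.1(2)-(4).** (a) column `j` of `C_ℓ` is everywhere positive iff
the network is `ℓ`-step input-state set reachable at `Ω⁰ j`; (b) row `i` of `C_ℓ` is
everywhere positive iff `Ωᵈ i` is globally `ℓ`-step input-state set reachable;
(c) `C_ℓ` is everywhere positive iff the network is `ℓ`-step input-state set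
reachable from every `Ω⁰ j` to every `Ωᵈ i`. -/
theorem reachMat_col_row_all_pos_iff (M N ℓ a b : ℕ)
    (hM : 0 < M) (hN : 0 < N) (hℓ : 1 ≤ ℓ)
    (L : Fin M → Fin N → Fin N)
    (Ω0 : Fin a → Set (Fin M × Fin N)) (Ωd : Fin b → Set (Fin M × Fin N)) :
    (∀ j : Fin a,
      ((∀ i : Fin b, 0 < reachMat L ℓ Ω0 Ωd i j) ↔
        ∀ i : Fin b, ∃ w : Fin (ℓ + 1) → Fin M × Fin N,
          IsISTraj L ℓ w ∧ w 0 ∈ Ω0 j ∧ w (Fin.last ℓ) ∈ Ωd i)) ∧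
    (∀ i : Fin b,
      ((∀ j : Fin a, 0 < reachMat L ℓ Ω0 Ωd i j) ↔
        ∀ j : Fin a, ∃ w : Fin (ℓ + 1) → Fin M × Fin N,
          IsISTraj L ℓ w ∧ w 0 ∈ Ω0 j ∧ w (Fin.last ℓ) ∈ Ωd i)) ∧
    ((∀ (i : Fin b) (j : Fin a), 0 < reachMat L ℓ Ω0 Ωd i j) ↔
      ∀ (j : Fin a) (i : Fin b), ∃ w : Fin (ℓ + 1) → Fin M × Fin N,
        IsISTraj L ℓ w ∧ w 0 ∈ Ω0 j ∧ w (Fin.last ℓ) ∈ Ωd i) := by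
  refine ⟨fun j => forall_congr' fun i => reachMat_pos_iff L ℓ Ω0 Ωd i j,
    fun i => forall_congr' fun j => reachMat_pos_iff L ℓ Ω0 Ωd i j, ?_⟩
  constructor
  · intro h j i; exact (reachMat_pos_iff L ℓ Ω0 Ωd i j).mp (h i j)
  · intro h i j; exact (reachMat_pos_iff L ℓ Ω0 Ωd i j).mpr (h j i)
end
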